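/- Let H be a finite dimensional Hilbert space, u a unitary on H, and p a nonzero orthogonal projection on H. Then |tr(pu)|/tr(p) ≤ DS_N(S_u(p)) + 2/N, where S_u(p) is the p-localized spectral measure of u. -/

import Mathlib

open MeasureTheory

/-- The resolution-N disuniformity of a measure on the circle T = [0,1). -/
noncomputable def DS (N : ℕ) (μ : Measure ℝ) : ℝ :=
  ∑ k ∈ Finset.range N, |(μ (Set.Ico ((k : ℝ) / N) (((k : ℝ) + 1) / N))).toReal - 1 / N|

/-- The localized spectral measure S_u(P) on the circle T = [0,1) associated to a
projection P, given eigendata (ϑ, t) of a unitary u: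
S_u(P) = (Σₖ ‖Pϑₖ‖² δ_{tₖ})/tr(P). -/
noncomputable def locSpec {H : Type*} [NormedAddCommGroup H] [InnerProductSpace ℂ H]
    [FiniteDimensional ℂ H] {d : ℕ} (ϑ : Fin d → H) (t : Fin d → ℝ)
    (P : H →ₗ[ℂ] H) : Measure ℝ :=
  (ENNReal.ofReal ((LinearMap.trace ℂ H P).re))⁻¹ •
    ∑ k, ENNReal.ofReal (‖P (ϑ k)‖ ^ 2) • Measure.dirac (t k)

namespace Stmt12Aux

open Real

noncomputable def ff (φ t : ℝ) : ℝ := Real.cos (2*π*t - φ)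
noncomputable def gg (φ s : ℝ) : ℝ := 2*π* max 0 (-Real.sin (2*π*s - φ))

lemma ff_hasDeriv (φ s : ℝ) : HasDerivAt (ff φ) (-(Real.sin (2*π*s - φ)) * (2*π)) s := by
  have h1 : HasDerivAt (fun t : ℝ => 2*π*t - φ) (2*π) s := by
    simpa using ((hasDerivAt_id s).const_mul (2*π)).sub_const φ
  exact (Real.hasDerivAt_cos (2*π*s - φ)).comp s h1

lemma gg_cont (φ : ℝ) : Continuous (gg φ) := by
  unfold gg; fun_prop

lemma gg_nonneg (φ s : ℝ) : 0 ≤ gg φ s := by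
  unfold gg; positivity

lemma ff_le (φ a x : ℝ) (hax : a ≤ x) :
    ff φ x - ff φ a ≤ ∫ s in a..x, gg φ s := by
  have hderiv : ∀ y ∈ Set.uIcc a x, HasDerivAt (ff φ) (-(Real.sin (2*π*y - φ)) * (2*π)) y :=
    fun y _ => ff_hasDeriv φ y
  have hint : IntervalIntegrable (fun y => -(Real.sin (2*π*y - φ)) * (2*π)) volume a x := by
    apply Continuous.intervalIntegrable; fun_prop
  rw [← intervalIntegral.integral_eq_sub_of_hasDerivAt hderiv hint]
  apply intervalIntegral.integral_mono_on hax hint ((gg_cont φ).intervalIntegrable a x)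
  intro y _
  unfold gg
  rw [mul_comm]
  gcongr
  exact le_max_right _ _

lemma int_maxsin : ∫ x in (0:ℝ)..(2*π), max 0 (-Real.sin x) = 2 := by
  have h1 : ∫ x in (0:ℝ)..π, max 0 (-Real.sin x) = 0 := by
    rw [intervalIntegral.integral_congr (g := fun _ => (0:ℝ))]
    · simp
    · intro x hx
      rw [Set.uIcc_of_le Real.pi_nonneg] at hx
      have : 0 ≤ Real.sin x := Real.sin_nonneg_of_mem_Icc hx
      simp [max_eq_left, neg_nonpos.mpr this]
  have h2 : ∫ x in (π:ℝ)..(2*π), max 0 (-Real.sin x) = 2 := by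
    rw [intervalIntegral.integral_congr (g := fun x => -Real.sin x)]
    · rw [intervalIntegral.integral_neg, integral_sin]
      rw [Real.cos_pi, Real.cos_two_pi]; ring
    · intro x hx
      rw [Set.uIcc_of_le (by linarith [Real.pi_pos] : (π:ℝ) ≤ 2*π)] at hx
      have hs : Real.sin x ≤ 0 := by
        have : 0 ≤ Real.sin (x - π) :=
          Real.sin_nonneg_of_mem_Icc ⟨by linarith [hx.1], by linarith [hx.2]⟩
        rw [Real.sin_sub_pi] at this; linarith
      simp [max_eq_right, neg_nonneg.mpr hs]
  have hc : Continuous (fun x : ℝ => max 0 (-Real.sin x)) := by fun_prop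
  rw [← intervalIntegral.integral_add_adjacent_intervals (μ := volume)
    (hc.intervalIntegrable (0:ℝ) π) (hc.intervalIntegrable π (2*π)), h1, h2]
  ring

lemma gg_int01 (φ : ℝ) : ∫ s in (0:ℝ)..1, gg φ s = 2 := by
  unfold gg
  have h2π : (2*π) ≠ 0 := by positivity
  calc ∫ s in (0:ℝ)..1, 2*π*max 0 (-Real.sin (2*π*s - φ))
      = ∫ s in (0:ℝ)..1, (fun x => 2*π*max 0 (-Real.sin x)) (2*π*s + (-φ)) := by
        simp [sub_eq_add_neg]
    _ = (2*π)⁻¹ • ∫ x in (2*π*0 + -φ)..(2*π*1 + -φ), 2*π*max 0 (-Real.sin x) := by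
        exact intervalIntegral.integral_comp_mul_add (fun x => 2*π*max 0 (-Real.sin x)) h2π (-φ)
    _ = ∫ x in (-φ)..(-φ + 2*π), max 0 (-Real.sin x) := by
        rw [intervalIntegral.integral_const_mul, smul_eq_mul, inv_mul_cancel_left₀ h2π,
          show (2*π*0 + -φ) = -φ by ring, show (2*π*1 + -φ) = -φ + 2*π by ring]
    _ = ∫ x in (0:ℝ)..(0 + 2*π), max 0 (-Real.sin x) := by
        have hper : Function.Periodic (fun x => max 0 (-Real.sin x)) (2*π) := by
          intro x; simp [Real.sin_add_two_pi]
        exact hper.intervalIntegral_add_eq (-φ) 0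
    _ = 2 := by rw [zero_add]; exact int_maxsin

lemma partition_ind (N : ℕ) (hN : 0 < N) (x : ℝ) (hx : x ∈ Set.Ico (0:ℝ) 1) :
    ∑ j ∈ Finset.range N, (if x ∈ Set.Ico ((j:ℝ)/N) (((j:ℝ)+1)/N) then (1:ℝ) else 0) = 1 := by
  have hN' : (0:ℝ) < N := by exact_mod_cast hN
  have hxN : (0:ℝ) ≤ x*N := mul_nonneg hx.1 hN'.le
  have key : ∀ j : ℕ, x ∈ Set.Ico ((j:ℝ)/N) (((j:ℝ)+1)/N) ↔ ⌊x*N⌋₊ = j := by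
    intro j
    rw [Set.mem_Ico, div_le_iff₀ hN', lt_div_iff₀ hN', Nat.floor_eq_iff hxN]
  have hfl : ⌊x*N⌋₊ ∈ Finset.range N := by
    rw [Finset.mem_range, Nat.floor_lt hxN]
    nlinarith [hx.2, hx.1]
  calc ∑ j ∈ Finset.range N, (if x ∈ Set.Ico ((j:ℝ)/N) (((j:ℝ)+1)/N) then (1:ℝ) else 0)
      = ∑ j ∈ Finset.range N, (if ⌊x*N⌋₊ = j then (1:ℝ) else 0) := by
        refine Finset.sum_congr rfl fun j _ => ?_
        rw [if_congr (key j) rfl rfl]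
    _ = 1 := by rw [Finset.sum_ite_eq]; simp [hfl]

lemma sum_cos_eq_zero (φ : ℝ) (N : ℕ) (hN : 2 ≤ N) :
    ∑ j ∈ Finset.range N, Real.cos (2*π*((j:ℝ)/N) - φ) = 0 := by
  have hN0 : (N:ℂ) ≠ 0 := Nat.cast_ne_zero.mpr (by omega)
  set ζ : ℂ := Complex.exp (2*π*Complex.I/N) with hζdef
  have hprim := Complex.isPrimitiveRoot_exp N (by omega)
  have hζN : ζ ^ N = 1 := hprim.pow_eq_one
  have hζ1 : ζ ≠ 1 := hprim.ne_one (by omega)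
  have hterm : ∀ j : ℕ, Real.cos (2*π*((j:ℝ)/N) - φ)
      = (Complex.exp (-(φ:ℂ)*Complex.I) * ζ ^ j).re := by
    intro j
    rw [← Complex.exp_nat_mul, ← Complex.exp_add, ← Complex.exp_ofReal_mul_I_re]
    congr 2
    push_cast
    field_simp
    ring
  rw [Finset.sum_congr rfl fun j _ => hterm j, ← Complex.re_sum, ← Finset.mul_sum,
    geom_sum_eq hζ1, hζN]
  simp

lemma locSpec_apply {H : Type*} [NormedAddCommGroup H] [InnerProductSpace ℂ H]
    [FiniteDimensional ℂ H] {d : ℕ} (ϑ : Fin d → H) (t : Fin d → ℝ) (P : H →ₗ[ℂ] H)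
    (S : Set ℝ) (hS : MeasurableSet S) (hT : 0 < (LinearMap.trace ℂ H P).re) :
    ((locSpec ϑ t P) S).toReal
      = ∑ k, S.indicator (fun _ => ‖P (ϑ k)‖^2 / (LinearMap.trace ℂ H P).re) (t k) := by
  classical
  set T := (LinearMap.trace ℂ H P).re
  rw [locSpec, Measure.smul_apply]
  have h1 : (∑ k, ENNReal.ofReal (‖P (ϑ k)‖ ^ 2) • Measure.dirac (t k)) S
      = ∑ k, ENNReal.ofReal (‖P (ϑ k)‖ ^ 2) * (if t k ∈ S then 1 else 0) := by
    rw [Measure.coe_finset_sum, Finset.sum_apply]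
    refine Finset.sum_congr rfl fun k _ => ?_
    rw [Measure.smul_apply, Measure.dirac_apply' _ hS, smul_eq_mul, Set.indicator_apply]
    simp
  rw [h1, smul_eq_mul, ENNReal.toReal_mul, ENNReal.toReal_inv, ENNReal.toReal_ofReal hT.le,
    ENNReal.toReal_sum (fun k _ => by split <;> simp [ENNReal.mul_eq_top]),
    Finset.mul_sum]
  refine Finset.sum_congr rfl fun k _ => ?_
  rw [ENNReal.toReal_mul, ENNReal.toReal_ofReal (by positivity), Set.indicator_apply]
  split <;> simp <;> ring

lemma trace_onb {H : Type*} [NormedAddCommGroup H] [InnerProductSpace ℂ H]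
    {d : ℕ} (b : OrthonormalBasis (Fin d) ℂ H) (f : H →ₗ[ℂ] H) :
    LinearMap.trace ℂ H f = ∑ k, (inner ℂ (b k) (f (b k)) : ℂ) := by
  classical
  rw [LinearMap.trace_eq_matrix_trace ℂ b.toBasis f, Matrix.trace]
  congr 1
  ext k
  rw [Matrix.diag_apply, LinearMap.toMatrix_apply, OrthonormalBasis.coe_toBasis,
    OrthonormalBasis.coe_toBasis_repr_apply, OrthonormalBasis.repr_apply_apply]

lemma inner_proj {H : Type*} [NormedAddCommGroup H] [InnerProductSpace ℂ H]
    [FiniteDimensional ℂ H] (p : H →ₗ[ℂ] H) (hp : p ∘ₗ p = p)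
    (hpa : LinearMap.adjoint p = p) (x : H) :
    (inner ℂ x (p x) : ℂ) = ((‖p x‖^2 : ℝ) : ℂ) := by
  conv_lhs => rw [← hp]
  rw [LinearMap.comp_apply, ← LinearMap.adjoint_inner_left, hpa,
    inner_self_eq_norm_sq_to_K]
  norm_num

end Stmt12Aux

open Stmt12Aux Real

/-- |tr(pu)|/tr(p) ≤ DS_N(S_u(p)) + 2/N. -/
theorem stmt12 {H : Type*} [NormedAddCommGroup H] [InnerProductSpace ℂ H]
    [FiniteDimensional ℂ H]
    (N : ℕ) (hN : 0 < N) (d : ℕ) (hd : Module.finrank ℂ H = d)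
    (u : H ≃ₗᵢ[ℂ] H) (ϑ : Fin d → H) (horth : Orthonormal ℂ ϑ)
    (t : Fin d → ℝ) (ht : ∀ k, t k ∈ Set.Ico (0 : ℝ) 1)
    (hu : ∀ k, u (ϑ k) = Complex.exp (2 * (Real.pi : ℂ) * Complex.I * (t k : ℂ)) • ϑ k)
    (p : H →ₗ[ℂ] H) (hp : p ∘ₗ p = p) (hpa : LinearMap.adjoint p = p) (hp0 : p ≠ 0) :
    ‖LinearMap.trace ℂ H (p ∘ₗ (u.toLinearEquiv : H →ₗ[ℂ] H))‖ /
        (LinearMap.trace ℂ H p).re ≤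
      DS N (locSpec ϑ t p) + 2 / N := by
  classical
  -- orthonormal basis equal to ϑ
  obtain ⟨b, hb⟩ : ∃ b : OrthonormalBasis (Fin d) ℂ H, ∀ i, b i = ϑ i := by
    have hcard : Module.finrank ℂ H = Fintype.card (Fin d) := by simpa using hd
    have horth' : Orthonormal ℂ ((Set.univ : Set (Fin d)).restrict ϑ) :=
      horth.comp _ Subtype.val_injective
    obtain ⟨b, hb⟩ := Orthonormal.exists_orthonormalBasis_extension_of_card_eq hcard horth'
    exact ⟨b, fun i => hb i (Set.mem_univ i)⟩
  set w : Fin d → ℝ := fun k => ‖p (ϑ k)‖^2 with hwdef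
  set T : ℝ := (LinearMap.trace ℂ H p).re with hTdef
  have hwnn : ∀ k, 0 ≤ w k := fun k => sq_nonneg _
  have hinner : ∀ k, (inner ℂ (ϑ k) (p (ϑ k)) : ℂ) = ((w k : ℝ) : ℂ) :=
    fun k => inner_proj p hp hpa (ϑ k)
  have htrp : LinearMap.trace ℂ H p = ∑ k, ((w k : ℝ) : ℂ) := by
    rw [trace_onb b]
    refine Finset.sum_congr rfl fun k _ => ?_
    rw [hb k, hinner k]
  have hT : T = ∑ k, w k := by
    rw [hTdef, htrp, Complex.re_sum]
    refine Finset.sum_congr rfl fun k _ => Complex.ofReal_re _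
  have hTpos : 0 < T := by
    have hex : ∃ k, p (ϑ k) ≠ 0 := by
      by_contra h
      push_neg at h
      apply hp0
      apply b.toBasis.ext
      intro i
      rw [OrthonormalBasis.coe_toBasis, hb i, h i, LinearMap.zero_apply]
    obtain ⟨k0, hk0⟩ := hex
    have h1 : 0 < w k0 := by
      have := norm_pos_iff.mpr hk0
      positivity
    rw [hT]
    calc (0:ℝ) < w k0 := h1
      _ ≤ ∑ k, w k := Finset.single_le_sum (fun k _ => hwnn k) (Finset.mem_univ k0)
  have hT0 : (T:ℂ) ≠ 0 := by exact_mod_cast ne_of_gt hTpos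
  -- trace of p ∘ u
  have htru : LinearMap.trace ℂ H (p ∘ₗ (u.toLinearEquiv : H →ₗ[ℂ] H))
      = ∑ k, ((w k : ℝ):ℂ) * Complex.exp (2*(π:ℂ)*Complex.I*(t k : ℂ)) := by
    rw [trace_onb b]
    refine Finset.sum_congr rfl fun k _ => ?_
    have : (p ∘ₗ (u.toLinearEquiv : H →ₗ[ℂ] H)) (b k)
        = Complex.exp (2*(π:ℂ)*Complex.I*(t k : ℂ)) • p (ϑ k) := by
      rw [LinearMap.comp_apply]
      have : ((u.toLinearEquiv : H →ₗ[ℂ] H)) (b k) = u (ϑ k) := by rw [hb k]; rfl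
      rw [this, hu k, LinearMap.map_smul]
    rw [this, hb k, inner_smul_right, hinner k]
    ring
  set v : Fin d → ℝ := fun k => w k / T with hvdef
  have hvnn : ∀ k, 0 ≤ v k := fun k => div_nonneg (hwnn k) hTpos.le
  have hvsum : ∑ k, v k = 1 := by
    rw [hvdef]
    simp only []
    rw [← Finset.sum_div, ← hT, div_self (ne_of_gt hTpos)]
  set z : ℂ := ∑ k, ((v k : ℝ):ℂ) * Complex.exp (2*(π:ℂ)*Complex.I*(t k : ℂ)) with hzdef
  have hlhs : ‖LinearMap.trace ℂ H (p ∘ₗ (u.toLinearEquiv : H →ₗ[ℂ] H))‖ / T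
      = ‖z‖ := by
    have h1 : LinearMap.trace ℂ H (p ∘ₗ (u.toLinearEquiv : H →ₗ[ℂ] H)) = (T:ℂ) * z := by
      rw [htru, hzdef, Finset.mul_sum]
      refine Finset.sum_congr rfl fun k _ => ?_
      rw [hvdef]
      push_cast
      rw [← mul_assoc, mul_div_cancel₀ _ hT0]
    rw [h1, norm_mul, Complex.norm_of_nonneg hTpos.le,
      mul_div_cancel_left₀ _ (ne_of_gt hTpos)]
  rw [hlhs]
  -- case N = 1
  rcases eq_or_lt_of_le (Nat.one_le_iff_ne_zero.mpr (by omega) : 1 ≤ N) with hN1 | hN2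
  · have habs1 : ‖z‖ ≤ 1 := by
      rw [hzdef]
      calc ‖∑ k, ((v k : ℝ):ℂ) * Complex.exp (2*(π:ℂ)*Complex.I*(t k : ℂ))‖
          ≤ ∑ k, ‖((v k : ℝ):ℂ) * Complex.exp (2*(π:ℂ)*Complex.I*(t k : ℂ))‖ :=
            norm_sum_le _ _
        _ = ∑ k, v k := by
            refine Finset.sum_congr rfl fun k _ => ?_
            rw [norm_mul, Complex.norm_of_nonneg (hvnn k), Complex.norm_exp]
            have : (2*(π:ℂ)*Complex.I*(t k : ℂ)).re = 0 := by simp [Complex.mul_re]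
            rw [this, Real.exp_zero, mul_one]
        _ = 1 := hvsum
    have hDSnn : 0 ≤ DS N (locSpec ϑ t p) := by
      rw [DS]
      exact Finset.sum_nonneg fun j _ => abs_nonneg _
    have : (2:ℝ)/N = 2 := by rw [← hN1]; norm_num
    linarith
  -- case N ≥ 2
  have hNR : (0:ℝ) < N := by exact_mod_cast hN
  set φ : ℝ := z.arg with hφdef
  -- |z| = ∑ v k * cos(2π t k - φ)
  have hre : ‖z‖ = ∑ k, v k * ff φ (t k) := by
    have h1 : ((‖z‖ : ℝ):ℂ) = z * Complex.exp (-(φ:ℂ)*Complex.I) := by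
      conv_rhs => rw [← Complex.norm_mul_exp_arg_mul_I z]
      rw [mul_assoc, ← Complex.exp_add, ← hφdef,
        show (φ:ℂ)*Complex.I + -(φ:ℂ)*Complex.I = 0 by ring, Complex.exp_zero, mul_one]
    have h2 : ‖z‖ = (z * Complex.exp (-(φ:ℂ)*Complex.I)).re := by
      rw [← h1, Complex.ofReal_re]
    rw [h2, hzdef, Finset.sum_mul, Complex.re_sum]
    refine Finset.sum_congr rfl fun k _ => ?_
    rw [mul_assoc, ← Complex.exp_add,
      show 2*(π:ℂ)*Complex.I*(t k : ℂ) + -(φ:ℂ)*Complex.I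
        = ((2*π*(t k) - φ : ℝ) : ℂ) * Complex.I by push_cast; ring]
    simp only [Complex.mul_re, Complex.ofReal_re, Complex.ofReal_im, Complex.exp_ofReal_mul_I_re]
    rw [ff]
    ring
  rw [hre]
  -- interval data
  set E : ℕ → ℝ := fun j => ∫ s in ((j:ℝ)/N)..(((j:ℝ)+1)/N), gg φ s with hEdef
  have hstep : ∀ j : ℕ, ((j:ℝ))/N ≤ ((j:ℝ)+1)/N := by
    intro j
    gcongr
    linarith
  have hEnn : ∀ j : ℕ, 0 ≤ E j := fun j =>
    intervalIntegral.integral_nonneg (hstep j) (fun x _ => gg_nonneg φ x)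
  set M : ℕ → ℝ := fun j => min 1 (ff φ ((j:ℝ)/N) + E j) with hMdef
  have hMle1 : ∀ j, M j ≤ 1 := fun j => min_le_left _ _
  have hMge : ∀ j, -1 ≤ M j := by
    intro j
    refine le_min (by norm_num) ?_
    have h1 : -1 ≤ ff φ ((j:ℝ)/N) := Real.neg_one_le_cos _
    have h2 := hEnn j
    linarith
  have hMabs : ∀ j, |M j| ≤ 1 := fun j => abs_le.mpr ⟨hMge j, hMle1 j⟩
  have hMbound : ∀ j : ℕ, ∀ x ∈ Set.Ico ((j:ℝ)/N) (((j:ℝ)+1)/N), ff φ x ≤ M j := by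
    intro j x hx
    refine le_min (Real.cos_le_one _) ?_
    have h1 := ff_le φ ((j:ℝ)/N) x hx.1
    have h2 : ∫ s in ((j:ℝ)/N)..x, gg φ s ≤ E j := by
      apply intervalIntegral.integral_mono_interval le_rfl hx.1 hx.2.le
      · filter_upwards with s using gg_nonneg φ s
      · exact (gg_cont φ).intervalIntegrable _ _
    linarith
  rw [DS]
  set μm : ℕ → ℝ :=
    fun j => ((locSpec ϑ t p) (Set.Ico ((j:ℝ)/N) (((j:ℝ)+1)/N))).toReal with hμmdef
  have hμ : ∀ j : ℕ, μm j
      = ∑ k, (if t k ∈ Set.Ico ((j:ℝ)/N) (((j:ℝ)+1)/N) then v k else 0) := by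
    intro j
    rw [hμmdef]
    simp only []
    rw [locSpec_apply ϑ t p _ measurableSet_Ico hTpos]
    refine Finset.sum_congr rfl fun k _ => ?_
    rw [Set.indicator_apply]
    try (split <;> rfl)
  have step1 : ∑ k, v k * ff φ (t k) ≤ ∑ j ∈ Finset.range N, M j * μm j := by
    calc ∑ k, v k * ff φ (t k)
        = ∑ k, ∑ j ∈ Finset.range N,
            (if t k ∈ Set.Ico ((j:ℝ)/N) (((j:ℝ)+1)/N) then (1:ℝ) else 0)
              * (v k * ff φ (t k)) := by
          refine Finset.sum_congr rfl fun k _ => ?_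
          rw [← Finset.sum_mul, partition_ind N hN (t k) (ht k), one_mul]
      _ ≤ ∑ k, ∑ j ∈ Finset.range N,
            (if t k ∈ Set.Ico ((j:ℝ)/N) (((j:ℝ)+1)/N) then (1:ℝ) else 0)
              * (v k * M j) := by
          refine Finset.sum_le_sum fun k _ => Finset.sum_le_sum fun j _ => ?_
          split
          case isTrue h =>
            rw [one_mul, one_mul]
            exact mul_le_mul_of_nonneg_left (hMbound j (t k) h) (hvnn k)
          case isFalse h => rw [zero_mul, zero_mul]
      _ = ∑ j ∈ Finset.range N, M j * μm j := by
          rw [Finset.sum_comm]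
          refine Finset.sum_congr rfl fun j _ => ?_
          rw [hμ j, Finset.mul_sum]
          refine Finset.sum_congr rfl fun k _ => ?_
          split <;> ring
  have hsumE : ∑ j ∈ Finset.range N, E j = 2 := by
    have key := intervalIntegral.sum_integral_adjacent_intervals (μ := volume)
      (a := fun k : ℕ => (k:ℝ)/N) (n := N)
      (fun k _ => (gg_cont φ).intervalIntegrable _ _)
    calc ∑ j ∈ Finset.range N, E j
        = ∑ j ∈ Finset.range N, ∫ s in ((j:ℝ)/N)..((((j+1):ℕ):ℝ)/N), gg φ s := by
          refine Finset.sum_congr rfl fun j _ => ?_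
          rw [hEdef]
          push_cast
          try ring_nf
      _ = ∫ s in (((0:ℕ):ℝ)/N)..(((N:ℕ):ℝ)/N), gg φ s := key
      _ = ∫ s in (0:ℝ)..1, gg φ s := by
          norm_num [div_self (ne_of_gt hNR)]
      _ = 2 := gg_int01 φ
  have hsumcos : ∑ j ∈ Finset.range N, ff φ ((j:ℝ)/N) = 0 := by
    have := sum_cos_eq_zero φ N hN2
    simpa [ff] using this
  have hsumM : ∑ j ∈ Finset.range N, M j ≤ 2 := by
    calc ∑ j ∈ Finset.range N, M j
        ≤ ∑ j ∈ Finset.range N, (ff φ ((j:ℝ)/N) + E j) :=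
          Finset.sum_le_sum fun j _ => min_le_right _ _
      _ = 0 + 2 := by rw [Finset.sum_add_distrib, hsumcos, hsumE]
      _ = 2 := by ring
  have hb1 : ∑ j ∈ Finset.range N, M j * (μm j - 1/N)
      ≤ ∑ j ∈ Finset.range N, |μm j - 1/N| := by
    refine Finset.sum_le_sum fun j _ => ?_
    calc M j * (μm j - 1/N) ≤ |M j * (μm j - 1/N)| := le_abs_self _
      _ = |M j| * |μm j - 1/N| := abs_mul _ _
      _ ≤ 1 * |μm j - 1/N| := mul_le_mul_of_nonneg_right (hMabs j) (abs_nonneg _)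
      _ = |μm j - 1/N| := one_mul _
  have hb2 : ∑ j ∈ Finset.range N, M j * (1/N) ≤ 2/N := by
    rw [← Finset.sum_mul]
    calc (∑ j ∈ Finset.range N, M j) * (1/(N:ℝ))
        ≤ 2 * (1/N) := by
          apply mul_le_mul_of_nonneg_right hsumM
          positivity
      _ = 2/N := by ring
  have hsplit : ∑ j ∈ Finset.range N, M j * μm j
      = ∑ j ∈ Finset.range N, M j * (μm j - 1/N) + ∑ j ∈ Finset.range N, M j * (1/N) := by
    rw [← Finset.sum_add_distrib]
    refine Finset.sum_congr rfl fun j _ => by ring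
  linarith [step1]
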